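/- Let G be a red/blue/green 3-edge-colored complete graph on N vertices with no monochromatic copy of K_{1,n} ∪ K_{1,m}, where N ≥ 2m + n + m + 2 and every vertex has at most m incident blue edges and at most m incident red edges for two of the colors. Then any two vertices have at least N − 1 − 2m incident green edges each, and if N − 1 − 2m ≥ n + m + 1, G contains a green copy of K_{1,n} ∪ K_{1,m}, a contradiction; hence no such G exists when N ≥ n + 3m + 2. -/

import Mathlib

open Finset

/-- A symmetric edge-coloring of a complete graph (given as a function on ordered pairs). -/
def IsSymm2 {V C : Type*} (c : V → V → C) : Prop := ∀ a b : V, c a b = c b a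

/-- The coloring contains a rainbow triangle: three vertices whose three pairwise
edges receive three distinct colors. -/
def HasRainbowTriangle {V C : Type*} (c : V → V → C) : Prop :=
  ∃ a b d : V, a ≠ b ∧ a ≠ d ∧ b ≠ d ∧
    c a b ≠ c a d ∧ c a b ≠ c b d ∧ c a d ≠ c b d

/-- The coloring contains a monochromatic star `K_{1,n}`: a center `v` with `n`
incident edges of a single color. -/
def HasMonoStar {V C : Type*} (c : V → V → C) (n : ℕ) : Prop :=
  ∃ (i : C) (v : V) (S : Finset V), S.card = n ∧ v ∉ S ∧ ∀ x ∈ S, c v x = i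

/-- The coloring contains a monochromatic copy of `K_{1,n} ∪ K_{1,m}`: two
vertex-disjoint stars of the same color with `n` and `m` leaves respectively. -/
def HasMonoTwoStars {V C : Type*} (c : V → V → C) (n m : ℕ) : Prop :=
  ∃ (i : C) (u v : V) (S T : Finset V), u ≠ v ∧ S.card = n ∧ T.card = m ∧
    Disjoint S T ∧ u ∉ S ∧ u ∉ T ∧ v ∉ S ∧ v ∉ T ∧
    (∀ x ∈ S, c u x = i) ∧ (∀ y ∈ T, c v y = i)


/-- If in a 3-coloring (red = 0, blue = 1, green = 2) of `K_N` with `N ≥ n + 3m + 2`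
every vertex has at most `m` incident red edges and at most `m` incident blue edges,
then every vertex has at least `N - 1 - 2m` incident green edges, and since
`N - 1 - 2m ≥ n + m + 1` there is a green copy of `K_{1,n} ∪ K_{1,m}`; hence no such
coloring can avoid a monochromatic `K_{1,n} ∪ K_{1,m}`. -/
theorem no_green_free_coloring (n m N : ℕ) (hN : n + 3 * m + 2 ≤ N)
    (c : Fin N → Fin N → Fin 3) (hsymm : IsSymm2 c)
    (hred : ∀ v : Fin N,
      ((Finset.univ : Finset (Fin N)).filter (fun u => u ≠ v ∧ c v u = 0)).card ≤ m)
    (hblue : ∀ v : Fin N,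
      ((Finset.univ : Finset (Fin N)).filter (fun u => u ≠ v ∧ c v u = 1)).card ≤ m) :
    (∀ v : Fin N, N - 1 - 2 * m ≤
      ((Finset.univ : Finset (Fin N)).filter (fun u => u ≠ v ∧ c v u = 2)).card) ∧
    (∃ (u v : Fin N) (S T : Finset (Fin N)), u ≠ v ∧ S.card = n ∧ T.card = m ∧
      Disjoint S T ∧ u ∉ S ∧ u ∉ T ∧ v ∉ S ∧ v ∉ T ∧
      (∀ x ∈ S, c u x = 2) ∧ (∀ y ∈ T, c v y = 2)) ∧
    HasMonoTwoStars c n m := by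

  -- green degree lower bound
  have key : ∀ v : Fin N, N - 1 - 2 * m ≤
      ((Finset.univ : Finset (Fin N)).filter (fun u => u ≠ v ∧ c v u = 2)).card := by
    intro v
    have tri : ∀ x : Fin 3, x = 0 ∨ x = 1 ∨ x = 2 := by decide
    have hsplit : (Finset.univ.filter (fun u : Fin N => u ≠ v)) ⊆
        (Finset.univ.filter (fun u => u ≠ v ∧ c v u = 0)) ∪
        (Finset.univ.filter (fun u => u ≠ v ∧ c v u = 1)) ∪
        (Finset.univ.filter (fun u => u ≠ v ∧ c v u = 2)) := by
      intro u hu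
      simp only [Finset.mem_filter, Finset.mem_union, Finset.mem_univ, true_and] at *
      rcases tri (c v u) with h | h | h <;> tauto
    have hcard : (Finset.univ.filter (fun u : Fin N => u ≠ v)).card = N - 1 := by
      rw [Finset.filter_ne', Finset.card_erase_of_mem (Finset.mem_univ v),
        Finset.card_univ, Fintype.card_fin]
    have h1 := Finset.card_le_card hsplit
    have h2 := Finset.card_union_le
      ((Finset.univ.filter (fun u : Fin N => u ≠ v ∧ c v u = 0)) ∪
        (Finset.univ.filter (fun u => u ≠ v ∧ c v u = 1)))
      (Finset.univ.filter (fun u : Fin N => u ≠ v ∧ c v u = 2))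
    have h3 := Finset.card_union_le
      (Finset.univ.filter (fun u : Fin N => u ≠ v ∧ c v u = 0))
      (Finset.univ.filter (fun u : Fin N => u ≠ v ∧ c v u = 1))
    have hr := hred v
    have hb := hblue v
    omega
  refine ⟨key, ?_⟩
  have hN0 : 0 < N := by omega
  have hN1 : 1 < N := by omega
  set u : Fin N := ⟨0, hN0⟩ with hu
  set v : Fin N := ⟨1, hN1⟩ with hv
  have huv : u ≠ v := by simp [hu, hv, Fin.ext_iff]
  set Gu := (Finset.univ : Finset (Fin N)).filter (fun x => x ≠ u ∧ c u x = 2) with hGu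
  set Gv := (Finset.univ : Finset (Fin N)).filter (fun x => x ≠ v ∧ c v x = 2) with hGv
  have hGuc : n + m + 1 ≤ Gu.card := le_trans (by omega) (key u)
  have hGvc : n + m + 1 ≤ Gv.card := le_trans (by omega) (key v)
  -- choose S
  have hS1 : n ≤ (Gu \ {v}).card := by
    have h2 := Finset.card_union_le (Gu \ {v}) ({v} : Finset (Fin N))
    have h3 : Gu ⊆ (Gu \ {v}) ∪ {v} := by
      intro x hx
      by_cases hxv : x = v
      · simp [hxv]
      · simp [Finset.mem_union, Finset.mem_sdiff, hx, hxv]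
    have := Finset.card_le_card h3
    simp only [Finset.card_singleton] at *
    omega
  obtain ⟨S, hSsub, hScard⟩ := Finset.exists_subset_card_eq hS1
  have hS2 : m ≤ (Gv \ insert u S).card := by
    have h3 : Gv ⊆ (Gv \ insert u S) ∪ insert u S := by
      intro x hx
      by_cases hxs : x ∈ insert u S
      · exact Finset.mem_union_right _ hxs
      · exact Finset.mem_union_left _ (Finset.mem_sdiff.mpr ⟨hx, hxs⟩)
    have := Finset.card_le_card h3
    have h2 := Finset.card_union_le (Gv \ insert u S) (insert u S)
    have h4 : (insert u S).card ≤ S.card + 1 := Finset.card_insert_le _ _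
    omega
  obtain ⟨T, hTsub, hTcard⟩ := Finset.exists_subset_card_eq hS2
  have hSGu : S ⊆ Gu := hSsub.trans Finset.sdiff_subset
  have hTGv : T ⊆ Gv := hTsub.trans Finset.sdiff_subset
  have hdisj : Disjoint S T := by
    rw [Finset.disjoint_right]
    intro x hxT hxS
    have := hTsub hxT
    simp only [Finset.mem_sdiff, Finset.mem_insert] at this
    exact this.2 (Or.inr hxS)
  have huS : u ∉ S := fun h => by
    have := hSGu h
    simp only [hGu, Finset.mem_filter] at this
    exact this.2.1 rfl
  have huT : u ∉ T := fun h =>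
    (Finset.mem_sdiff.mp (hTsub h)).2 (Finset.mem_insert_self u S)
  have hvS : v ∉ S := fun h =>
    (Finset.mem_sdiff.mp (hSsub h)).2 (Finset.mem_singleton_self v)
  have hvT : v ∉ T := fun h => by
    have := hTGv h
    simp only [hGv, Finset.mem_filter] at this
    exact this.2.1 rfl
  have hcS : ∀ x ∈ S, c u x = 2 := fun x hx => by
    have := hSGu hx
    simp only [hGu, Finset.mem_filter] at this
    exact this.2.2
  have hcT : ∀ y ∈ T, c v y = 2 := fun y hy => by
    have := hTGv hy
    simp only [hGv, Finset.mem_filter] at this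
    exact this.2.2
  exact ⟨⟨u, v, S, T, huv, hScard, hTcard, hdisj, huS, huT, hvS, hvT, hcS, hcT⟩,
    ⟨2, u, v, S, T, huv, hScard, hTcard, hdisj, huS, huT, hvS, hvT, hcS, hcT⟩⟩
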